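/- Let R be a semiprime ring and f : R → ∏_{i=1}^s A_i an injective ring homomorphism into a finite product of simple Artinian rings that is irredundant (no component can be omitted while preserving injectivity). Then s ≤ |min(R)|, the number of minimal prime ideals of R. In particular, if f : R → ∏_{i=1}^s A_i is injective with s > |min(R)|, then f is redundant. -/

import Mathlib

/-- A ring is semiprime if `a R a = 0` implies `a = 0`. -/
def IsSemiprimeRing' (R : Type*) [Ring R] : Prop :=
  ∀ a : R, (∀ r : R, a * r * a = 0) → a = 0

/-- A two-sided ideal `P` is prime if `P ≠ ⊤` and `a R b ⊆ P` implies `a ∈ P` or `b ∈ P`. -/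
def TwoSidedIdeal.IsPrime' {R : Type*} [Ring R] (P : TwoSidedIdeal R) : Prop :=
  P ≠ ⊤ ∧ ∀ a b : R, (∀ r : R, a * r * b ∈ P) → a ∈ P ∨ b ∈ P

/-- A minimal prime of a ring. -/
def TwoSidedIdeal.IsMinimalPrime' {R : Type*} [Ring R] (P : TwoSidedIdeal R) : Prop :=
  P.IsPrime' ∧ ∀ Q : TwoSidedIdeal R, Q.IsPrime' → Q ≤ P → Q = P

namespace StmtAux18
open Pointwise

variable {R : Type*} [Ring R]

lemma exists_r (hsp : IsSemiprimeRing' R) {x : R} (hx : x ≠ 0) : ∃ r, x * r * x ≠ 0 := by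
  by_contra h
  push_neg at h
  exact hx (hsp x h)

/-- The m-sequence starting at a nonzero element of a semiprime ring. -/
noncomputable def seq (hsp : IsSemiprimeRing' R) (a : R) (ha : a ≠ 0) : ℕ → {x : R // x ≠ 0}
  | 0 => ⟨a, ha⟩
  | n + 1 =>
    ⟨(seq hsp a ha n).1 * (exists_r hsp (seq hsp a ha n).2).choose * (seq hsp a ha n).1,
      (exists_r hsp (seq hsp a ha n).2).choose_spec⟩

lemma seq_succ (hsp : IsSemiprimeRing' R) (a : R) (ha : a ≠ 0) (n : ℕ) :
    (seq hsp a ha (n + 1)).1 =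
      (seq hsp a ha n).1 * (exists_r hsp (seq hsp a ha n).2).choose * (seq hsp a ha n).1 := rfl

lemma seq_dvd (hsp : IsSemiprimeRing' R) (a : R) (ha : a ≠ 0) :
    ∀ m n, n ≤ m →
      (∃ t, (seq hsp a ha m).1 = (seq hsp a ha n).1 * t) ∧
      (∃ t, (seq hsp a ha m).1 = t * (seq hsp a ha n).1) := by
  intro m
  induction m with
  | zero =>
    intro n hn
    interval_cases n
    exact ⟨⟨1, (mul_one _).symm⟩, ⟨1, (one_mul _).symm⟩⟩
  | succ m ih =>
    intro n hn
    rcases Nat.eq_or_lt_of_le hn with h | h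
    · subst h
      exact ⟨⟨1, (mul_one _).symm⟩, ⟨1, (one_mul _).symm⟩⟩
    · have hn' : n ≤ m := Nat.lt_succ_iff.mp h
      obtain ⟨⟨t, ht⟩, ⟨u, hu⟩⟩ := ih n hn'
      constructor
      · refine ⟨t * (exists_r hsp (seq hsp a ha m).2).choose * (seq hsp a ha m).1, ?_⟩
        rw [seq_succ]
        generalize (exists_r hsp (seq hsp a ha m).2).choose = r
        rw [ht]
        simp [mul_assoc]
      · refine ⟨(seq hsp a ha m).1 * (exists_r hsp (seq hsp a ha m).2).choose * u, ?_⟩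
        rw [seq_succ]
        generalize (exists_r hsp (seq hsp a ha m).2).choose = r
        rw [hu]
        simp [mul_assoc]

lemma seq_msys (hsp : IsSemiprimeRing' R) (a : R) (ha : a ≠ 0) (n m : ℕ) :
    ∃ r k, (seq hsp a ha n).1 * r * (seq hsp a ha m).1 = (seq hsp a ha k).1 := by
  rcases le_total n m with h | h
  · obtain ⟨⟨t, ht⟩, -⟩ := seq_dvd hsp a ha m n h
    refine ⟨t * (exists_r hsp (seq hsp a ha m).2).choose, m + 1, ?_⟩
    rw [seq_succ]
    generalize (exists_r hsp (seq hsp a ha m).2).choose = r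
    rw [ht]
    simp [mul_assoc]
  · obtain ⟨-, ⟨u, hu⟩⟩ := seq_dvd hsp a ha n m h
    refine ⟨(exists_r hsp (seq hsp a ha n).2).choose * u, n + 1, ?_⟩
    rw [seq_succ]
    generalize (exists_r hsp (seq hsp a ha n).2).choose = r
    rw [hu]
    simp [mul_assoc]

open TwoSidedIdeal in
/-- Key annihilation lemma: if `x R y ⊆ I` then `(I ⊔ (x)) R (I ⊔ (y)) ⊆ I`. -/
lemma sup_span_mul_mem {I : TwoSidedIdeal R} {x y : R}
    (hxy : ∀ r : R, x * r * y ∈ I) {z w : R}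
    (hz : z ∈ I ⊔ TwoSidedIdeal.span {x}) (hw : w ∈ I ⊔ TwoSidedIdeal.span {y}) (r : R) :
    z * r * w ∈ I := by
  rw [TwoSidedIdeal.mem_sup] at hz hw
  obtain ⟨i, hi, p, hp, rfl⟩ := hz
  obtain ⟨i', hi', q, hq, rfl⟩ := hw
  rw [TwoSidedIdeal.mem_span_iff_mem_addSubgroup_closure] at hp hq
  set Tx : Set R := Set.univ * {x} * Set.univ with hTx
  set Ty : Set R := Set.univ * {y} * Set.univ with hTy
  have key : ∀ p q : R, p ∈ AddSubgroup.closure Tx →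
      q ∈ AddSubgroup.closure Ty → ∀ r : R,
      p * r * q ∈ I := by
    intro p q hp hq
    induction hp using AddSubgroup.closure_induction with
    | mem p hmem =>
      induction hq using AddSubgroup.closure_induction with
      | mem q hmem' =>
        intro r
        rw [hTx] at hmem
        rw [hTy] at hmem'
        obtain ⟨-, ⟨u, -, x', hx', rfl⟩, v, -, rfl⟩ := hmem
        obtain ⟨-, ⟨u', -, y', hy', rfl⟩, v', -, rfl⟩ := hmem'
        rw [Set.mem_singleton_iff] at hx' hy'
        have h1 : x' * (v * r * u') * y' ∈ I := by
          rw [hx', hy']; exact hxy _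
        have h2 : u * (x' * (v * r * u') * y') * v' ∈ I :=
          I.mul_mem_right _ _ (I.mul_mem_left _ _ h1)
        convert h2 using 1
        simp [mul_assoc]
      | zero =>
        intro r
        simpa using I.zero_mem
      | add q₁ q₂ h₁ h₂ ih₁ ih₂ =>
        intro r
        have := I.add_mem (ih₁ r) (ih₂ r)
        simpa [mul_add] using this
      | neg q hq ih =>
        intro r
        have := I.neg_mem (ih r)
        simpa [mul_neg] using this
    | zero =>
      intro r
      simpa using I.zero_mem
    | add p₁ p₂ h₁ h₂ ih₁ ih₂ =>
      intro r
      have := I.add_mem (ih₁ r) (ih₂ r)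
      simpa [add_mul] using this
    | neg p hp ih =>
      intro r
      have := I.neg_mem (ih r)
      simpa [neg_mul] using this
  have e : (i + p) * r * (i' + q) =
      i * (r * (i' + q)) + (p * r) * i' + p * r * q := by noncomm_ring
  rw [e]
  exact I.add_mem (I.add_mem (I.mul_mem_right _ _ hi) (I.mul_mem_left _ _ hi'))
    (key p q hp hq r)

lemma exists_minimalPrime_not_mem (hsp : IsSemiprimeRing' R) {a : R} (ha : a ≠ 0) :
    ∃ P : TwoSidedIdeal R, P.IsMinimalPrime' ∧ a ∉ P := by
  classical
  set sq : ℕ → R := fun n => (seq hsp a ha n).1 with hsq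
  -- Zorn: a maximal two-sided ideal avoiding the m-sequence
  obtain ⟨M, -, hM⟩ := zorn_le_nonempty₀ {I : TwoSidedIdeal R | ∀ n, sq n ∉ I}
    (fun c hc hchain y hy => by
      refine ⟨TwoSidedIdeal.mk' {x | ∃ I ∈ c, x ∈ I}
        ⟨y, hy, TwoSidedIdeal.zero_mem y⟩
        (fun {x₁ x₂} ⟨I₁, hI₁, h₁⟩ ⟨I₂, hI₂, h₂⟩ => by
          rcases hchain.total hI₁ hI₂ with h | h
          · exact ⟨I₂, hI₂, I₂.add_mem (h h₁) h₂⟩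
          · exact ⟨I₁, hI₁, I₁.add_mem h₁ (h h₂)⟩)
        (fun {x} ⟨I, hI, h⟩ => ⟨I, hI, I.neg_mem h⟩)
        (fun {x₁ x₂} ⟨I, hI, h⟩ => ⟨I, hI, I.mul_mem_left _ _ h⟩)
        (fun {x₁ x₂} ⟨I, hI, h⟩ => ⟨I, hI, I.mul_mem_right _ _ h⟩), ?_, ?_⟩
      · intro n hn
        rw [TwoSidedIdeal.mem_mk'] at hn
        obtain ⟨I, hI, h⟩ := hn
        exact hc hI n h
      · intro I hI x hx
        exact (TwoSidedIdeal.mem_mk' _ _ _ _ _ _ x).mpr ⟨I, hI, hx⟩)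
    ⊥ (fun n => by simp [TwoSidedIdeal.mem_bot, (seq hsp a ha n).2, hsq])
  -- M is prime
  have hMprime : M.IsPrime' := by
    constructor
    · intro h
      exact hM.prop 0 (h ▸ TwoSidedIdeal.mem_top _)
    · intro x y hxy
      by_contra hcon
      push_neg at hcon
      obtain ⟨hx, hy⟩ := hcon
      have hJx : ∃ n, sq n ∈ M ⊔ TwoSidedIdeal.span {x} := by
        by_contra hJ
        push_neg at hJ
        have hle := hM.le_of_ge (y := M ⊔ TwoSidedIdeal.span {x}) hJ le_sup_left
        exact hx (hle (TwoSidedIdeal.mem_sup_right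
          (TwoSidedIdeal.subset_span (Set.mem_singleton x))))
      have hJy : ∃ n, sq n ∈ M ⊔ TwoSidedIdeal.span {y} := by
        by_contra hJ
        push_neg at hJ
        have hle := hM.le_of_ge (y := M ⊔ TwoSidedIdeal.span {y}) hJ le_sup_left
        exact hy (hle (TwoSidedIdeal.mem_sup_right
          (TwoSidedIdeal.subset_span (Set.mem_singleton y))))
      obtain ⟨n, hn⟩ := hJx
      obtain ⟨m, hm⟩ := hJy
      obtain ⟨r, k, hk⟩ := seq_msys hsp a ha n m
      have : sq k ∈ M := by
        show (seq hsp a ha k).1 ∈ M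
        rw [← hk]
        exact sup_span_mul_mem hxy hn hm r
      exact hM.prop k this
  have haM : a ∉ M := hM.prop 0
  -- Zorn downward: a minimal prime below M
  obtain ⟨P, hMP, hPmem, hPmax⟩ := zorn_le_nonempty₀ (α := (TwoSidedIdeal R)ᵒᵈ)
    {Q : (TwoSidedIdeal R)ᵒᵈ | (OrderDual.ofDual Q).IsPrime' ∧ OrderDual.ofDual Q ≤ M}
    (fun c hc hchain y hy => by
      classical
      set L : TwoSidedIdeal R := TwoSidedIdeal.mk'
        {x | ∀ Q ∈ c, x ∈ OrderDual.ofDual Q}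
        (fun Q _ => TwoSidedIdeal.zero_mem _)
        (fun {x₁ x₂} h₁ h₂ Q hQ => (OrderDual.ofDual Q).add_mem (h₁ Q hQ) (h₂ Q hQ))
        (fun {x} h Q hQ => (OrderDual.ofDual Q).neg_mem (h Q hQ))
        (fun {x₁ x₂} h Q hQ => (OrderDual.ofDual Q).mul_mem_left _ _ (h Q hQ))
        (fun {x₁ x₂} h Q hQ => (OrderDual.ofDual Q).mul_mem_right _ _ (h Q hQ)) with hL
      have hmemL : ∀ x, x ∈ L ↔ ∀ Q ∈ c, x ∈ OrderDual.ofDual Q := by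
        intro x; rw [hL, TwoSidedIdeal.mem_mk']; rfl
      have hLle : ∀ Q ∈ c, L ≤ OrderDual.ofDual Q := by
        intro Q hQ z hz
        exact (hmemL z).mp hz Q hQ
      have hLprime : L.IsPrime' := by
        constructor
        · intro htop
          have h1 : (1 : R) ∈ L := htop ▸ TwoSidedIdeal.mem_top _
          rw [hmemL] at h1
          exact (hc hy).1.1 ((OrderDual.ofDual y).one_mem_iff.mp (h1 y hy))
        · intro p q hpq
          by_cases hpL : p ∈ L
          · exact Or.inl hpL
          right
          rw [hmemL] at hpL
          push_neg at hpL
          obtain ⟨Q₁, hQ₁c, hpQ₁⟩ := hpL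
          rw [hmemL]
          intro Q hQc
          rcases hchain.total hQc hQ₁c with hle | hle
          · -- in dual order: Q ≤ᵈ Q₁ means ofDual Q₁ ≤ ofDual Q
            have h' : OrderDual.ofDual Q₁ ≤ OrderDual.ofDual Q := hle
            rcases (hc hQ₁c).1.2 p q (fun r => hLle Q₁ hQ₁c (hpq r)) with h | h
            · exact absurd h hpQ₁
            · exact h' h
          · have h' : OrderDual.ofDual Q ≤ OrderDual.ofDual Q₁ := hle
            rcases (hc hQc).1.2 p q (fun r => hLle Q hQc (hpq r)) with h | h
            · exact absurd (h' h) hpQ₁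
            · exact h
      refine ⟨OrderDual.toDual L, ⟨hLprime, le_trans (hLle y hy) (hc hy).2⟩, ?_⟩
      intro Q hQ
      exact hLle Q hQ)
    (OrderDual.toDual M) ⟨hMprime, le_rfl⟩
  · refine ⟨OrderDual.ofDual P, ⟨hPmem.1, ?_⟩, fun hmem => haM (hPmem.2 hmem)⟩
    intro Q hQ hQle
    have : OrderDual.ofDual P ≤ Q :=
      hPmax (y := OrderDual.toDual Q) ⟨hQ, le_trans hQle hPmem.2⟩ hQle
    exact le_antisymm hQle this

end StmtAux18

theorem stmt_18 {R : Type u_1} [Ring R] (hsp : IsSemiprimeRing' R) (s : ℕ)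
    (A : Fin s → Type u_2)
    [∀ i, Ring (A i)] [∀ i, IsSimpleRing (A i)] [∀ i, IsArtinianRing (A i)]
    (f : R →+* ∀ i, A i) (hf : Function.Injective f) :
    ((∀ i : Fin s,
        ¬ Function.Injective (fun r : R => fun j : {j : Fin s // j ≠ i} => f r j.1)) →
      ∃ g : Fin s → {P : TwoSidedIdeal R // P.IsMinimalPrime'}, Function.Injective g) ∧
    (∀ hfin : {P : TwoSidedIdeal R | P.IsMinimalPrime'}.Finite, hfin.toFinset.card < s →
      ∃ i : Fin s,
        Function.Injective (fun r : R => fun j : {j : Fin s // j ≠ i} => f r j.1)) := by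
  classical
  have main : (∀ i : Fin s,
      ¬ Function.Injective (fun r : R => fun j : {j : Fin s // j ≠ i} => f r j.1)) →
      ∃ g : Fin s → {P : TwoSidedIdeal R // P.IsMinimalPrime'}, Function.Injective g := by
    intro h
    have key : ∀ i, ∃ a : R, a ≠ 0 ∧ ∀ j, j ≠ i → f a j = 0 := by
      intro i
      obtain ⟨x, y, hxy, hne⟩ := Function.not_injective_iff.mp (h i)
      refine ⟨x - y, sub_ne_zero.mpr hne, fun j hj => ?_⟩
      have := congrFun hxy ⟨j, hj⟩
      simp only at this
      rw [map_sub, Pi.sub_apply, this, sub_self]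
    choose a ha0 haz using key
    have orth : ∀ i j, i ≠ j → ∀ r, a i * r * a j = 0 := by
      intro i j hij r
      apply hf
      rw [map_zero]
      funext k
      rw [Pi.zero_apply, map_mul, map_mul, Pi.mul_apply, Pi.mul_apply]
      by_cases hk : k = i
      · have : f (a j) k = 0 := haz j k (by rw [hk]; exact hij)
        rw [this, mul_zero]
      · have : f (a i) k = 0 := haz i k hk
        rw [this, zero_mul, zero_mul]
    choose P hP hnP using fun i => StmtAux18.exists_minimalPrime_not_mem hsp (ha0 i)
    refine ⟨fun i => ⟨P i, hP i⟩, ?_⟩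
    intro i j hij
    by_contra hne
    have hPeq : P i = P j := congrArg Subtype.val hij
    have h0 : ∀ r : R, a i * r * a j ∈ P j := by
      intro r
      rw [orth i j hne r]
      exact TwoSidedIdeal.zero_mem _
    rcases (hP j).1.2 (a i) (a j) h0 with h' | h'
    · exact hnP i (hPeq ▸ h')
    · exact hnP j h'
  refine ⟨main, ?_⟩
  intro hfin hcard
  by_contra hno
  push_neg at hno
  obtain ⟨g, hg⟩ := main hno
  have hle : s ≤ hfin.toFinset.card := by
    have h2 : (Finset.univ : Finset (Fin s)).card ≤ hfin.toFinset.card := by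
      apply Finset.card_le_card_of_injOn (fun i : Fin s => ((g i).1 : TwoSidedIdeal R))
      · intro i _
        rw [Finset.mem_coe, Set.Finite.mem_toFinset]
        exact (g i).2
      · intro i _ j _ hij
        exact hg (Subtype.ext hij)
    simpa using h2
  omega
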